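/- arXiv:1201.6130 — 7 statements merged into one kernel-verified Lean document; each statement's English description precedes it below -/
import Mathlib

section
/- Let C be an n×n real positive definite matrix with entries c_{i,j}, and let θ_1,...,θ_n > 0 with θ = θ_1 + ... + θ_n. Then C ≤ θ·diag(c_{1,1}/θ_1, ..., c_{n,n}/θ_n) in the Loewner order, i.e., the matrix θ·diag(c_{i,i}/θ_i) − C is positive semidefinite. -/
open Matrix Finset

theorem loewner_diag_bound (n : ℕ) (C : Matrix (Fin n) (Fin n) ℝ)
    (hC : C.PosDef) (θ : Fin n → ℝ) (hθ : ∀ i, 0 < θ i) :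
    (Matrix.diagonal (fun i => (∑ j, θ j) * (C i i / θ i)) - C).PosSemidef := by
  have hps := hC.posSemidef
  open scoped MatrixOrder in set S := CFC.sqrt C with hS
  have hSps : S.PosSemidef := by
    open scoped MatrixOrder in exact (CFC.sqrt_nonneg C).posSemidef
  have hSherm : S.IsHermitian := hSps.1
  have hSS : S * S = C := by
    open scoped MatrixOrder in exact CFC.sqrt_mul_sqrt_self C hps.nonneg
  have hsym : ∀ i k, S i k = S k i := fun i k => by
    simpa using hSherm.apply k i
  have hdiag : ∀ i, C i i = ∑ k, (S k i) ^ 2 := by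
    intro i
    rw [← hSS]
    simp only [mul_apply]
    exact Finset.sum_congr rfl fun k _ => by rw [hsym i k, sq]
  refine PosSemidef.of_dotProduct_mulVec_nonneg ?_ ?_
  · exact (isHermitian_diagonal _).sub hC.1
  · intro x
    have hx : star x = x := rfl
    rw [hx, sub_mulVec, dotProduct_sub, sub_nonneg]
    have hquad : x ⬝ᵥ (C *ᵥ x) = ∑ k, (∑ i, S k i * x i) ^ 2 := by
      rw [← hSS, ← mulVec_mulVec, dotProduct_mulVec]
      have hvm : x ᵥ* S = S *ᵥ x := by
        ext k
        simp [vecMul, mulVec, dotProduct, mul_comm]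
        exact Finset.sum_congr rfl fun i _ => by rw [hsym i k, mul_comm]
      rw [hvm]
      simp [dotProduct, mulVec, sq]
    have hquadD : x ⬝ᵥ (Matrix.diagonal (fun i => (∑ j, θ j) * (C i i / θ i)) *ᵥ x)
        = (∑ j, θ j) * ∑ i, C i i * x i ^ 2 / θ i := by
      simp only [mulVec_diagonal, dotProduct, Finset.mul_sum]
      exact Finset.sum_congr rfl fun i _ => by ring
    rw [hquad, hquadD]
    rcases Nat.eq_zero_or_pos n with h0 | h0
    · subst h0; simp
    have hθsum : 0 < ∑ j, θ j :=
      Finset.sum_pos (fun j _ => hθ j) (Finset.univ_nonempty_iff.2 ⟨⟨0, h0⟩⟩)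
    calc ∑ k, (∑ i, S k i * x i) ^ 2
        ≤ ∑ k, (∑ j, θ j) * ∑ i, (S k i * x i) ^ 2 / θ i := by
          refine Finset.sum_le_sum fun k _ => ?_
          have h := sq_sum_div_le_sum_sq_div Finset.univ (fun i => S k i * x i)
            (fun i _ => hθ i)
          calc (∑ i, S k i * x i) ^ 2
              = ((∑ i, S k i * x i) ^ 2 / ∑ j, θ j) * (∑ j, θ j) := by
                field_simp
            _ ≤ (∑ i, (S k i * x i) ^ 2 / θ i) * (∑ j, θ j) := by
                exact mul_le_mul_of_nonneg_right h hθsum.le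
            _ = (∑ j, θ j) * ∑ i, (S k i * x i) ^ 2 / θ i := mul_comm _ _
      _ = (∑ j, θ j) * ∑ i, C i i * x i ^ 2 / θ i := by
          rw [← Finset.mul_sum, Finset.sum_comm]
          congr 1
          refine Finset.sum_congr rfl fun i _ => ?_
          rw [hdiag i, ← Finset.sum_div, Finset.sum_mul]
          congr 1
          exact Finset.sum_congr rfl fun k _ => by ring
end

section
/- Let C be an n×n real positive definite matrix, θ_1,...,θ_n ≥ 0, θ = Σθ_i, and let C̃ = diag(θ_i/c_{i,i}) where c_{i,i} are the diagonal entries of C (with the convention that terms with θ_i = 0 contribute 0). Then C·C̃·C ≤ θ·C in the Loewner order. -/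
open Matrix Finset

private lemma diag_pos_aux (n : ℕ) (C : Matrix (Fin n) (Fin n) ℝ)
    (hC : C.PosDef) (i : Fin n) : 0 < C i i := by
  have hne : (Pi.single i 1 : Fin n → ℝ) ≠ 0 := by
    intro h
    have h2 := congrFun h i
    simp [Pi.single_eq_same] at h2
  have h := hC.dotProduct_mulVec_pos hne
  simpa [single_dotProduct, mulVec_single, star_trivial] using h

private lemma sym_aux (n : ℕ) (C : Matrix (Fin n) (Fin n) ℝ)
    (hC : C.PosDef) (u v : Fin n → ℝ) : u ⬝ᵥ C *ᵥ v = v ⬝ᵥ C *ᵥ u := by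
  have hT : Cᵀ = C := by
    ext i j
    have := congrFun (congrFun hC.isHermitian.eq i) j
    simpa using this
  rw [dotProduct_mulVec, ← mulVec_transpose, hT, dotProduct_comm]

private lemma CS_aux (n : ℕ) (C : Matrix (Fin n) (Fin n) ℝ)
    (hC : C.PosDef) (x : Fin n → ℝ) (i : Fin n) :
    ((C *ᵥ x) i) ^ 2 ≤ C i i * (x ⬝ᵥ C *ᵥ x) := by
  have key : ∀ t : ℝ, 0 ≤ C i i * (t * t) + (2 * (C *ᵥ x) i) * t + x ⬝ᵥ C *ᵥ x := by
    intro t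
    have h := hC.posSemidef.dotProduct_mulVec_nonneg (t • (Pi.single i 1 : Fin n → ℝ) + x)
    rw [star_trivial] at h
    have e1 : (t • (Pi.single i 1 : Fin n → ℝ)) ⬝ᵥ C *ᵥ (t • (Pi.single i 1 : Fin n → ℝ))
        = C i i * (t * t) := by
      simp [smul_dotProduct, mulVec_smul, mulVec_single, single_dotProduct, smul_eq_mul]; ring
    have e0 : (Pi.single i (1:ℝ)) ⬝ᵥ C *ᵥ Pi.single i 1 = C i i := by
      simp [single_dotProduct, mulVec_single]
    have e2 : (Pi.single i (1:ℝ)) ⬝ᵥ C *ᵥ x = (C *ᵥ x) i := by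
      simp [single_dotProduct]
    have e3 : x ⬝ᵥ C *ᵥ (Pi.single i (1:ℝ)) = (C *ᵥ x) i := by
      rw [sym_aux n C hC]; exact e2
    calc (0:ℝ) ≤ _ := h
      _ = C i i * (t * t) + (2 * (C *ᵥ x) i) * t + x ⬝ᵥ C *ᵥ x := by
        simp only [add_dotProduct, dotProduct_add, mulVec_add, smul_dotProduct,
          dotProduct_smul, mulVec_smul, smul_eq_mul, e0, e1, e2, e3]
        ring
  have hd := discrim_le_zero key
  simp only [discrim] at hd
  nlinarith [hd]

theorem CCtilde_C_le_theta_C (n : ℕ) (C : Matrix (Fin n) (Fin n) ℝ)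
    (hC : C.PosDef) (θ : Fin n → ℝ) (hθ : ∀ i, 0 ≤ θ i) :
    ((∑ j, θ j) • C - C * Matrix.diagonal (fun i => θ i / C i i) * C).PosSemidef := by
  refine posSemidef_iff_dotProduct_mulVec.mpr ⟨?_, ?_⟩
  · have h1 : ((∑ j, θ j) • C).IsHermitian := by
      unfold Matrix.IsHermitian
      rw [conjTranspose_smul, hC.isHermitian.eq, star_trivial]
    have h2 : (C * Matrix.diagonal (fun i => θ i / C i i) * C).IsHermitian := by
      unfold Matrix.IsHermitian
      rw [conjTranspose_mul, conjTranspose_mul, hC.isHermitian.eq,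
        (isHermitian_diagonal _).eq, Matrix.mul_assoc]
    exact h1.sub h2
  · intro x
    rw [star_trivial]
    simp only [sub_mulVec, dotProduct_sub, smul_mulVec, dotProduct_smul, smul_eq_mul]
    rw [Matrix.mul_assoc, ← Matrix.mulVec_mulVec, ← Matrix.mulVec_mulVec]
    set y := C *ᵥ x with hy
    have hxy : x ⬝ᵥ C *ᵥ (Matrix.diagonal (fun i => θ i / C i i) *ᵥ y)
        = y ⬝ᵥ (Matrix.diagonal (fun i => θ i / C i i) *ᵥ y) := by
      rw [sym_aux n C hC, ← hy, dotProduct_comm]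
    have hq : 0 ≤ x ⬝ᵥ y := hC.posSemidef.dotProduct_mulVec_nonneg x
    have hterm : ∀ i ∈ univ, y i * ((θ i / C i i) * y i) ≤ θ i * (x ⬝ᵥ y) := by
      intro i _
      have hcs := CS_aux n C hC x i
      have hcii : 0 < C i i := diag_pos_aux n C hC i
      have h1 : θ i / C i i * (y i)^2 ≤ θ i / C i i * (C i i * (x ⬝ᵥ y)) :=
        mul_le_mul_of_nonneg_left hcs (div_nonneg (hθ i) hcii.le)
      calc y i * ((θ i / C i i) * y i) = θ i / C i i * (y i)^2 := by ring
        _ ≤ θ i / C i i * (C i i * (x ⬝ᵥ y)) := h1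
        _ = θ i * (x ⬝ᵥ y) := by field_simp
    have hsum : y ⬝ᵥ (Matrix.diagonal (fun i => θ i / C i i) *ᵥ y) ≤ (∑ j, θ j) * (x ⬝ᵥ y) := by
      simp only [dotProduct, mulVec_diagonal]
      rw [Finset.sum_mul]
      exact Finset.sum_le_sum hterm
    rw [hxy]
    linarith
end

section
/- Let 0 < a < b and x > 0. Then the derivative with respect to x of sinh(a·x)/sinh(b·x) satisfies 0 > d/dx [sinh(ax)/sinh(bx)] > (a − b)·sinh(ax)/sinh(bx). -/
open Real

lemma aux_sinh_lt_mul_cosh (t : ℝ) (ht : 0 < t) : Real.sinh t < t * Real.cosh t := by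
  have h : StrictMonoOn (fun s : ℝ => s * Real.cosh s - Real.sinh s) (Set.Ici 0) := by
    apply strictMonoOn_of_deriv_pos (convex_Ici 0)
    · fun_prop
    · intro s hs
      rw [interior_Ici] at hs
      have hd : HasDerivAt (fun s : ℝ => s * Real.cosh s - Real.sinh s)
          (1 * Real.cosh s + s * Real.sinh s - Real.cosh s) s :=
        ((hasDerivAt_id s).mul (Real.hasDerivAt_cosh s)).sub (Real.hasDerivAt_sinh s)
      rw [hd.deriv]
      have hsp : 0 < Real.sinh s := by
        rw [← Real.sinh_zero]
        exact Real.sinh_lt_sinh.mpr hs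
      have hs0 : (0:ℝ) < s := hs
      nlinarith [mul_pos hs0 hsp]
  have := h Set.self_mem_Ici (Set.mem_Ici.mpr ht.le) ht
  simpa using this

lemma aux_sinh_div_mono (p q : ℝ) (hp : 0 < p) (hpq : p < q) :
    q * Real.sinh p < p * Real.sinh q := by
  have h : StrictMonoOn (fun t : ℝ => Real.sinh t / t) (Set.Ioi 0) := by
    apply strictMonoOn_of_deriv_pos (convex_Ioi 0)
    · apply ContinuousOn.div (by fun_prop) continuousOn_id
      intro t ht
      exact ne_of_gt ht
    · intro t ht
      rw [interior_Ioi] at ht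
      have ht0 : (t : ℝ) ≠ 0 := ne_of_gt ht
      have hd : HasDerivAt (fun t : ℝ => Real.sinh t / t)
          ((Real.cosh t * t - Real.sinh t * 1) / t ^ 2) t :=
        (Real.hasDerivAt_sinh t).div (hasDerivAt_id t) ht0
      rw [hd.deriv]
      have h1 := aux_sinh_lt_mul_cosh t ht
      have : 0 < Real.cosh t * t - Real.sinh t * 1 := by nlinarith
      positivity
  have hq : 0 < q := hp.trans hpq
  have := h (Set.mem_Ioi.mpr hp) (Set.mem_Ioi.mpr hq) hpq
  rw [div_lt_div_iff₀ hp hq] at this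
  linarith

lemma aux_exp_div_mono (p q : ℝ) (hp : 0 < p) (hpq : p < q) :
    q * (Real.exp p - 1) < p * (Real.exp q - 1) := by
  have h : StrictMonoOn (fun t : ℝ => (Real.exp t - 1) / t) (Set.Ioi 0) := by
    apply strictMonoOn_of_deriv_pos (convex_Ioi 0)
    · apply ContinuousOn.div (by fun_prop) continuousOn_id
      intro t ht
      exact ne_of_gt ht
    · intro t ht
      rw [interior_Ioi] at ht
      have ht0 : (t : ℝ) ≠ 0 := ne_of_gt ht
      have hd : HasDerivAt (fun t : ℝ => (Real.exp t - 1) / t)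
          ((Real.exp t * t - (Real.exp t - 1) * 1) / t ^ 2) t :=
        ((Real.hasDerivAt_exp t).sub_const 1).div (hasDerivAt_id t) ht0
      rw [hd.deriv]
      have h1 : -t + 1 < Real.exp (-t) := Real.add_one_lt_exp (neg_ne_zero.mpr ht0)
      have h2 : Real.exp (-t) * Real.exp t = 1 := by
        rw [← Real.exp_add]; simp
      have h3 : 0 < Real.exp t := Real.exp_pos t
      have : 0 < Real.exp t * t - (Real.exp t - 1) * 1 := by nlinarith
      positivity
  have hq : 0 < q := hp.trans hpq
  have := h (Set.mem_Ioi.mpr hp) (Set.mem_Ioi.mpr hq) hpq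
  rw [div_lt_div_iff₀ hp hq] at this
  linarith

theorem sinh_quotient_deriv_bounds (a b x : ℝ) (ha : 0 < a) (hab : a < b) (hx : 0 < x) :
    deriv (fun y => Real.sinh (a * y) / Real.sinh (b * y)) x < 0 ∧
      (a - b) * (Real.sinh (a * x) / Real.sinh (b * x)) <
        deriv (fun y => Real.sinh (a * y) / Real.sinh (b * y)) x := by
  have hb : 0 < b := ha.trans hab
  have hu : 0 < a * x := mul_pos ha hx
  have hv : 0 < b * x := mul_pos hb hx
  have huv : a * x < b * x := by nlinarith
  have hsv : 0 < Real.sinh (b * x) := by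
    rw [← Real.sinh_zero]; exact Real.sinh_lt_sinh.mpr hv
  have hsu : 0 < Real.sinh (a * x) := by
    rw [← Real.sinh_zero]; exact Real.sinh_lt_sinh.mpr hu
  -- derivative computation
  have hd1 : HasDerivAt (fun y : ℝ => Real.sinh (a * y)) (Real.cosh (a * x) * a) x :=
    HasDerivAt.sinh (by simpa using (hasDerivAt_id x).const_mul a)
  have hd2 : HasDerivAt (fun y : ℝ => Real.sinh (b * y)) (Real.cosh (b * x) * b) x :=
    HasDerivAt.sinh (by simpa using (hasDerivAt_id x).const_mul b)
  have hD : HasDerivAt (fun y => Real.sinh (a * y) / Real.sinh (b * y))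
      ((Real.cosh (a * x) * a * Real.sinh (b * x) -
        Real.sinh (a * x) * (Real.cosh (b * x) * b)) / Real.sinh (b * x) ^ 2) x :=
    hd1.div hd2 (ne_of_gt hsv)
  set N := Real.cosh (a * x) * a * Real.sinh (b * x) -
      Real.sinh (a * x) * (Real.cosh (b * x) * b) with hN
  -- upper bound: N < 0
  have key1 : (a + b) * x * Real.sinh (b * x - a * x) <
      (b - a) * x * Real.sinh (a * x + b * x) := by
    have := aux_sinh_div_mono (b * x - a * x) (a * x + b * x) (by linarith) (by linarith)
    nlinarith
  have key1' : (a + b) * Real.sinh (b * x - a * x) <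
      (b - a) * Real.sinh (a * x + b * x) := by nlinarith
  have hNid : 2 * N = (a - b) * Real.sinh (a * x + b * x) +
      (a + b) * Real.sinh (b * x - a * x) := by
    rw [hN, Real.sinh_add, Real.sinh_sub]; ring
  have hNneg : N < 0 := by linarith
  -- lower bound
  have key2 : b * Real.sinh (a * x) * Real.exp (-(b * x)) <
      a * Real.sinh (b * x) * Real.exp (-(a * x)) := by
    have h3 := aux_exp_div_mono (2 * (a * x)) (2 * (b * x)) (by linarith) (by linarith)
    have h4 : b * (Real.exp (2 * (a * x)) - 1) < a * (Real.exp (2 * (b * x)) - 1) := by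
      nlinarith
    have e2u : Real.exp (2 * (a * x)) = Real.exp (a * x) * Real.exp (a * x) := by
      rw [two_mul, Real.exp_add]
    have e2v : Real.exp (2 * (b * x)) = Real.exp (b * x) * Real.exp (b * x) := by
      rw [two_mul, Real.exp_add]
    have hiu : Real.exp (-(a * x)) * Real.exp (a * x) = 1 := by
      rw [← Real.exp_add]; simp
    have hiv : Real.exp (-(b * x)) * Real.exp (b * x) = 1 := by
      rw [← Real.exp_add]; simp
    have hpu : 0 < Real.exp (a * x) := Real.exp_pos _
    have hpv : 0 < Real.exp (b * x) := Real.exp_pos _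
    have hpu' : 0 < Real.exp (-(a * x)) := Real.exp_pos _
    have hpv' : 0 < Real.exp (-(b * x)) := Real.exp_pos _
    have h5 : b * (Real.exp (a * x) * Real.exp (a * x) - 1) *
          (Real.exp (-(a * x)) * Real.exp (-(b * x)) / 2) <
        a * (Real.exp (b * x) * Real.exp (b * x) - 1) *
          (Real.exp (-(a * x)) * Real.exp (-(b * x)) / 2) := by
      rw [e2u, e2v] at h4
      exact mul_lt_mul_of_pos_right h4 (by positivity)
    have eL : b * ((Real.exp (a * x) - Real.exp (-(a * x))) / 2) * Real.exp (-(b * x)) =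
        b * (Real.exp (a * x) * Real.exp (a * x) - 1) *
          (Real.exp (-(a * x)) * Real.exp (-(b * x)) / 2) := by
      linear_combination (-(b * Real.exp (-(b * x)) * Real.exp (a * x)) / 2) * hiu
    have eR : a * ((Real.exp (b * x) - Real.exp (-(b * x))) / 2) * Real.exp (-(a * x)) =
        a * (Real.exp (b * x) * Real.exp (b * x) - 1) *
          (Real.exp (-(a * x)) * Real.exp (-(b * x)) / 2) := by
      linear_combination (-(a * Real.exp (-(a * x)) * Real.exp (b * x)) / 2) * hiv
    rw [Real.sinh_eq, Real.sinh_eq, eL, eR]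
    exact h5
  have key2' : (a - b) * (Real.sinh (a * x) * Real.sinh (b * x)) < N := by
    have hid2 : N - (a - b) * (Real.sinh (a * x) * Real.sinh (b * x)) =
        a * Real.sinh (b * x) * Real.exp (-(a * x)) -
          b * Real.sinh (a * x) * Real.exp (-(b * x)) := by
      rw [hN, ← Real.cosh_sub_sinh (a * x), ← Real.cosh_sub_sinh (b * x)]; ring
    linarith
  constructor
  · rw [hD.deriv]
    exact div_neg_of_neg_of_pos hNneg (by positivity)
  · rw [hD.deriv]
    have : (a - b) * (Real.sinh (a * x) / Real.sinh (b * x)) =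
        (a - b) * (Real.sinh (a * x) * Real.sinh (b * x)) / Real.sinh (b * x) ^ 2 := by
      field_simp
    rw [this]
    exact (div_lt_div_iff_of_pos_right (by positivity)).mpr key2'
end

section
/- Let a, b ≥ 0, c > 0 with b < c² + ac and d := a²/4 + b > 0, and let y solve the scalar Riccati initial value problem y' = y² + a·y − b with terminal condition y(T) = c, defined on (−∞, T]. Then for all t ≤ T, y(t) ≥ 1/(T − t + 1/(c + a/2)) − a/2. -/
theorem riccati_lower_bound (a b c T : ℝ) (y : ℝ → ℝ)
    (ha : 0 ≤ a) (hb : 0 ≤ b) (hc : 0 < c) (hbc : b < c ^ 2 + a * c)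
    (hd : 0 < a ^ 2 / 4 + b)
    (hode : ∀ t ≤ T, HasDerivAt y ((y t) ^ 2 + a * y t - b) t)
    (hT : y T = c) :
    ∀ t ≤ T, y t ≥ 1 / (T - t + 1 / (c + a / 2)) - a / 2 := by
  set d : ℝ := a ^ 2 / 4 + b with hd_def
  set z : ℝ → ℝ := fun t => y t + a / 2 with hz_def
  have hz : ∀ t ≤ T, HasDerivAt z (z t ^ 2 - d) t := by
    intro t ht
    have h := (hode t ht).add_const (a / 2)
    convert h using 1
    all_goals try rfl
    simp only [hz_def]
    ring
  have hzT : z T = c + a / 2 := by simp [hz_def, hT]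
  have hzTpos : 0 < z T := by rw [hzT]; linarith
  have hcont : ∀ t ≤ T, ContinuousAt z t := fun t ht => (hz t ht).continuousAt
  -- Step 1: z is positive on (-∞, T]
  have hzpos : ∀ t ≤ T, 0 < z t := by
    by_contra hcon
    push_neg at hcon
    obtain ⟨t₀, ht₀, hzt₀⟩ := hcon
    set S : Set ℝ := {u | u ∈ Set.Icc t₀ T ∧ z u ≤ 0} with hS_def
    have hSne : S.Nonempty := ⟨t₀, ⟨le_refl _, ht₀⟩, hzt₀⟩
    have hSbdd : BddAbove S := ⟨T, fun u hu => hu.1.2⟩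
    set s : ℝ := sSup S with hs_def
    have hsT : s ≤ T := csSup_le hSne fun u hu => hu.1.2
    have ht₀s : t₀ ≤ s := le_csSup hSbdd ⟨⟨le_refl _, ht₀⟩, hzt₀⟩
    have hs_cl : s ∈ closure S := (isLUB_csSup hSne hSbdd).mem_closure hSne
    have hzs_le : z s ≤ 0 := by
      obtain ⟨f, hf_mem, hf_lim⟩ := mem_closure_iff_seq_limit.1 hs_cl
      have htd : Filter.Tendsto (fun n => z (f n)) Filter.atTop (nhds (z s)) :=
        (hcont s hsT).tendsto.comp hf_lim
      exact le_of_tendsto htd (Filter.Eventually.of_forall fun n => (hf_mem n).2)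
    have hsltT : s < T := hsT.lt_of_ne (fun h => by rw [h] at hzs_le; linarith)
    have hpos_right : ∀ u, s < u → u ≤ T → 0 < z u := by
      intro u hsu huT
      by_contra h
      push_neg at h
      have : u ∈ S := ⟨⟨le_trans ht₀s hsu.le, huT⟩, h⟩
      exact absurd (le_csSup hSbdd this) (not_le.2 hsu)
    have hzs : z s = 0 := by
      rcases lt_or_eq_of_le hzs_le with hlt | heq
      · have hev : ∀ᶠ u in nhds s, z u < 0 :=
          (hcont s hsT).eventually_lt continuousAt_const hlt
        have hev' : ∀ᶠ u in nhdsWithin s (Set.Ioi s), z u < 0 :=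
          nhdsWithin_le_nhds hev
        have hmem : Set.Ioc s T ∈ nhdsWithin s (Set.Ioi s) :=
          Ioc_mem_nhdsGT_of_mem ⟨le_refl _, hsltT⟩
        obtain ⟨u, hu1, hu2⟩ :=
          (hev'.and (Filter.eventually_of_mem hmem fun x hx => hx)).exists
        exact absurd (hpos_right u hu2.1 hu2.2) (not_lt.2 hu1.le)
      · exact heq
    -- z'(s) = -d < 0, so z < 0 just to the right of s, contradiction
    have hds : HasDerivAt z (-d) s := by
      have h := hz s hsT
      rw [hzs] at h
      simpa using h
    have hslope : Filter.Tendsto (slope z s) (nhdsWithin s {s}ᶜ) (nhds (-d)) :=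
      hasDerivAt_iff_tendsto_slope.1 hds
    have hslope' : ∀ᶠ u in nhdsWithin s {s}ᶜ, slope z s u < 0 :=
      hslope.eventually_lt_const (by linarith)
    have hle : nhdsWithin s (Set.Ioi s) ≤ nhdsWithin s {s}ᶜ :=
      nhdsWithin_mono s (fun x hx => ne_of_gt hx)
    have hmem : Set.Ioc s T ∈ nhdsWithin s (Set.Ioi s) :=
      Ioc_mem_nhdsGT_of_mem ⟨le_refl _, hsltT⟩
    obtain ⟨u, hu1, hu2⟩ :=
      ((hslope'.filter_mono hle).and (Filter.eventually_of_mem hmem fun x hx => hx)).exists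
    have husub : 0 < u - s := sub_pos.2 hu2.1
    have hneg : z u - z s < 0 := by
      have h2 : (z u - z s) / (u - s) < 0 := by
        have h1' := hu1
        rwa [slope_def_field] at h1'
      have h3 := mul_neg_of_neg_of_pos h2 husub
      rwa [div_mul_cancel₀ _ husub.ne'] at h3
    rw [hzs] at hneg
    exact absurd (hpos_right u hu2.1 hu2.2) (not_lt.2 (by linarith))
  -- Step 2: g u = (z u)⁻¹ + u is monotone on Iic T
  set g : ℝ → ℝ := fun u => (z u)⁻¹ + u with hg_def
  have hgd : ∀ x < T, HasDerivAt g (-(z x ^ 2 - d) / (z x) ^ 2 + 1) x := by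
    intro x hx
    have hzx : z x ≠ 0 := (hzpos x hx.le).ne'
    exact ((hz x hx.le).inv hzx).add (hasDerivAt_id x)
  have hmono : MonotoneOn g (Set.Iic T) := by
    apply monotoneOn_of_deriv_nonneg (convex_Iic T)
    · intro x hx
      have : ContinuousAt g x := by
        have hzx : z x ≠ 0 := (hzpos x hx).ne'
        exact ((hcont x hx).inv₀ hzx).add continuousAt_id
      exact this.continuousWithinAt
    · intro x hx
      rw [interior_Iic] at hx
      exact ((hgd x hx).differentiableAt).differentiableWithinAt
    · intro x hx
      rw [interior_Iic] at hx
      rw [(hgd x hx).deriv]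
      have hzx : 0 < z x := hzpos x hx.le
      have : -(z x ^ 2 - d) / (z x) ^ 2 + 1 = d / (z x) ^ 2 := by
        field_simp
        ring
      rw [this]
      positivity
  -- conclude
  intro t ht
  have hkey : g t ≤ g T := hmono (Set.mem_Iic.2 ht) (Set.mem_Iic.2 le_rfl) ht
  have hzt : 0 < z t := hzpos t ht
  have hbound : (z t)⁻¹ ≤ T - t + 1 / (c + a / 2) := by
    have : (z t)⁻¹ + t ≤ (z T)⁻¹ + T := hkey
    rw [hzT] at this
    rw [one_div]
    linarith
  have hRpos : 0 < T - t + 1 / (c + a / 2) := by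
    have : 0 < (1 : ℝ) / (c + a / 2) := by positivity
    linarith
  have hfinal : 1 / (T - t + 1 / (c + a / 2)) ≤ z t := by
    rw [div_le_iff₀ hRpos]
    calc (1:ℝ) = z t * (z t)⁻¹ := (mul_inv_cancel₀ hzt.ne').symm
      _ ≤ z t * (T - t + 1 / (c + a / 2)) := mul_le_mul_of_nonneg_left hbound hzt.le
  have : z t = y t + a / 2 := rfl
  linarith
end

section
/- Let Λ > 0, ασ > 0, and define C(t;θ) := (Λθ̃/2)·coth((θ̃/2)(T − t)) − Λθ/2 for t < T, where θ̃ = √(θ² + 4ασ/Λ). Then for each fixed t < T, the map θ ↦ C(t;θ) is strictly decreasing on (0,∞); specifically ∂C/∂θ < 0 for all θ > 0. -/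
noncomputable def Real.coth (x : ℝ) : ℝ := Real.cosh x / Real.sinh x

lemma key_ineq (v : ℝ) (hv : 0 < v) :
    Real.sinh v * Real.cosh v - v < Real.sinh v ^ 2 := by
  have h := Real.add_one_lt_exp (x := -(2*v)) (by linarith)
  rw [Real.sinh_eq, Real.cosh_eq]
  have h1 : Real.exp (-(2*v)) = Real.exp (-v) * Real.exp (-v) := by
    rw [← Real.exp_add]; ring_nf
  have h2 : Real.exp v * Real.exp (-v) = 1 := by
    rw [← Real.exp_add]; simp
  nlinarith [Real.exp_pos v, Real.exp_pos (-v)]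

lemma aux_strict_anti (Λ c s : ℝ) (hΛ : 0 < Λ) (hcpos : 0 < c) (hs : 0 < s) :
    StrictAntiOn (fun θ : ℝ => Λ * Real.sqrt (θ ^ 2 + c) / 2 *
      Real.coth (Real.sqrt (θ ^ 2 + c) / 2 * s) - Λ * θ / 2) (Set.Ioi 0) := by
  have hderiv : ∀ x ∈ Set.Ioi (0:ℝ),
      HasDerivAt (fun θ => Λ * Real.sqrt (θ ^ 2 + c) / 2 *
        Real.coth (Real.sqrt (θ ^ 2 + c) / 2 * s) - Λ * θ / 2)
      (Λ / 2 * ((x / Real.sqrt (x ^ 2 + c)) *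
        (Real.coth (Real.sqrt (x ^ 2 + c) / 2 * s) -
          (Real.sqrt (x ^ 2 + c) / 2 * s) /
            Real.sinh (Real.sqrt (x ^ 2 + c) / 2 * s) ^ 2) - 1)) x := by
    intro x hx
    have hx0 : 0 < x := hx
    have hx2c : 0 < x ^ 2 + c := by positivity
    set φ : ℝ := Real.sqrt (x ^ 2 + c) with hφ
    have hφpos : 0 < φ := Real.sqrt_pos.2 hx2c
    set v : ℝ := φ / 2 * s with hv
    have hvpos : 0 < v := by positivity
    have hsinh : 0 < Real.sinh v := Real.sinh_pos_iff.2 hvpos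
    have h1 : HasDerivAt (fun θ : ℝ => θ ^ 2 + c) (2 * x) x := by
      simpa using (hasDerivAt_pow 2 x).add_const c
    have h2 : HasDerivAt (fun θ : ℝ => Real.sqrt (θ ^ 2 + c)) (x / φ) x := by
      have := (Real.hasDerivAt_sqrt (ne_of_gt hx2c)).comp x h1
      refine this.congr_deriv ?_
      rw [← hφ]
      field_simp
    have h3 : HasDerivAt (fun θ : ℝ => Real.sqrt (θ ^ 2 + c) / 2 * s)
        (x / φ / 2 * s) x := (h2.div_const 2).mul_const s
    have hcoth : HasDerivAt Real.coth (-(1 / Real.sinh v ^ 2)) v := by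
      have h := (Real.hasDerivAt_cosh v).div (Real.hasDerivAt_sinh v) (ne_of_gt hsinh)
      have heq : (Real.sinh v * Real.sinh v - Real.cosh v * Real.cosh v) / Real.sinh v ^ 2
          = -(1 / Real.sinh v ^ 2) := by
        have hsq := Real.cosh_sq_sub_sinh_sq v
        field_simp
        nlinarith
      rw [← heq]
      exact h
    have h4 : HasDerivAt (fun θ : ℝ => Real.coth (Real.sqrt (θ ^ 2 + c) / 2 * s))
        (-(1 / Real.sinh v ^ 2) * (x / φ / 2 * s)) x := by
      have := hcoth.comp x h3
      exact this
    have h5 : HasDerivAt (fun θ : ℝ => Λ * Real.sqrt (θ ^ 2 + c) / 2)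
        (Λ * (x / φ) / 2) x := (h2.const_mul Λ).div_const 2
    have h6 : HasDerivAt (fun θ : ℝ => Λ * θ / 2) (Λ / 2) x := by
      simpa using ((hasDerivAt_id x).const_mul Λ).div_const 2
    have h7 := (h5.mul h4).sub h6
    refine h7.congr_deriv ?_
    rw [← hφ, ← hv]
    unfold Real.coth
    field_simp
    ring
  apply strictAntiOn_of_deriv_neg (convex_Ioi 0)
  · exact fun x hx => ((hderiv x hx).continuousAt).continuousWithinAt
  · intro x hx
    rw [interior_Ioi] at hx
    rw [(hderiv x hx).deriv]
    have hx0 : 0 < x := hx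
    have hx2c : 0 < x ^ 2 + c := by positivity
    set φ : ℝ := Real.sqrt (x ^ 2 + c) with hφ
    have hφpos : 0 < φ := Real.sqrt_pos.2 hx2c
    have hxφ : x < φ := by
      have : x = Real.sqrt (x ^ 2) := by
        rw [Real.sqrt_sq hx0.le]
      rw [this, hφ]
      exact Real.sqrt_lt_sqrt (by positivity) (by nlinarith)
    set v : ℝ := φ / 2 * s with hv
    have hvpos : 0 < v := by positivity
    have hsinh : 0 < Real.sinh v := Real.sinh_pos_iff.2 hvpos
    have hkey := key_ineq v hvpos
    -- g = coth v - v / sinh v ^2 < 1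
    have hg : Real.coth v - v / Real.sinh v ^ 2 < 1 := by
      unfold Real.coth
      rw [div_sub_div _ _ (ne_of_gt hsinh) (by positivity), div_lt_one (by positivity)]
      nlinarith
    have ha : x / φ < 1 := (div_lt_one hφpos).2 hxφ
    have ha0 : 0 < x / φ := by positivity
    have : x / φ * (Real.coth v - v / Real.sinh v ^ 2) < 1 := by nlinarith
    have h8 : x / φ * (Real.coth v - v / Real.sinh v ^ 2) - 1 < 0 := by linarith
    nlinarith

theorem value_fn_strict_anti_in_theta (Λ ασ T t : ℝ)
    (hΛ : 0 < Λ) (hασ : 0 < ασ) (ht : t < T)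
    (C : ℝ → ℝ)
    (hC : C = fun θ =>
      Λ * Real.sqrt (θ ^ 2 + 4 * ασ / Λ) / 2 *
        Real.coth (Real.sqrt (θ ^ 2 + 4 * ασ / Λ) / 2 * (T - t)) - Λ * θ / 2) :
    StrictAntiOn C (Set.Ioi 0) := by
  subst hC
  exact aux_strict_anti Λ (4 * ασ / Λ) (T - t) hΛ (by positivity) (sub_pos.2 ht)
end

section
/- Let Λ > 0, ασ > 0, θ ≥ 0, θ̃ = √(θ² + 4ασ/Λ), T > 0, x > 0, and define the optimal trajectory X̃(t;θ) := x·sinh((θ̃/2)(T − t))·exp((θ/2)t)/sinh((θ̃/2)T) for t ∈ [0,T). Then X̃(0;θ) = x, X̃ is strictly decreasing in t on [0,T), lim_{t→T⁻} X̃(t;θ) = 0, and for each fixed t ∈ (0,T), X̃(t;θ) is strictly increasing in θ. -/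
lemma exp_slope_lt {y z : ℝ} (hy : 0 < y) (hyz : y < z) :
    z * (Real.exp y - 1) < y * (Real.exp z - 1) := by
  have h := strictConvexOn_exp.secant_strict_mono (a := 0) (x := y) (y := z)
    (Set.mem_univ _) (Set.mem_univ _) (Set.mem_univ _) hy.ne' (hy.trans hyz).ne' hyz
  simp only [Real.exp_zero, sub_zero] at h
  rw [div_lt_div_iff₀ hy (hy.trans hyz)] at h
  linarith

lemma ratio_strictMono {u T : ℝ} (hu : 0 < u) (huT : u < T) :
    StrictMonoOn (fun S => (1 - Real.exp (-(S*u))) / (1 - Real.exp (-(S*T)))) (Set.Ioi (0:ℝ)) := by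
  have hT : 0 < T := hu.trans huT
  have hden : ∀ S : ℝ, S ∈ Set.Ioi (0:ℝ) → 1 - Real.exp (-(S*T)) ≠ 0 := by
    intro S hS
    have : Real.exp (-(S*T)) < 1 := by
      rw [Real.exp_lt_one_iff]; nlinarith [hS.out]
    linarith
  apply strictMonoOn_of_deriv_pos (convex_Ioi 0)
  · exact ContinuousOn.div (by fun_prop) (by fun_prop) hden
  · intro S hS
    rw [interior_Ioi] at hS
    have hS0 : 0 < S := hS
    have hnum : HasDerivAt (fun S : ℝ => 1 - Real.exp (-(S*u))) (u * Real.exp (-(S*u))) S := by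
      have h1 : HasDerivAt (fun S : ℝ => -(S*u)) (-(1*u)) S := ((hasDerivAt_id S).mul_const u).neg
      have := (hasDerivAt_const S (1:ℝ)).sub h1.exp
      exact this.congr_deriv (by ring)
    have hden2 : HasDerivAt (fun S : ℝ => 1 - Real.exp (-(S*T))) (T * Real.exp (-(S*T))) S := by
      have h1 : HasDerivAt (fun S : ℝ => -(S*T)) (-(1*T)) S := ((hasDerivAt_id S).mul_const T).neg
      have := (hasDerivAt_const S (1:ℝ)).sub h1.exp
      exact this.congr_deriv (by ring)
    have hd := hnum.div hden2 (hden S hS)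
    rw [show deriv (fun S => (1 - Real.exp (-(S*u))) / (1 - Real.exp (-(S*T)))) S = _ from hd.deriv]
    have hA : 1 < Real.exp (S*u) := by nlinarith [Real.add_one_le_exp (S*u)]
    have hB : 1 < Real.exp (S*T) := by nlinarith [Real.add_one_le_exp (S*T)]
    have key : S*T * (Real.exp (S*u) - 1) < S*u * (Real.exp (S*T) - 1) :=
      exp_slope_lt (by positivity) (by nlinarith)
    have key2 : T * (Real.exp (S*u) - 1) < u * (Real.exp (S*T) - 1) := by nlinarith
    have hA' : Real.exp (-(S*u)) = (Real.exp (S*u))⁻¹ := by rw [Real.exp_neg]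
    have hB' : Real.exp (-(S*T)) = (Real.exp (S*T))⁻¹ := by rw [Real.exp_neg]
    have hApos : 0 < Real.exp (S*u) := Real.exp_pos _
    have hBpos : 0 < Real.exp (S*T) := Real.exp_pos _
    rw [hA', hB']
    apply div_pos
    · have h3 : 0 < (Real.exp (S*u))⁻¹ * (Real.exp (S*T))⁻¹ := by positivity
      have h4 := mul_lt_mul_of_pos_left key2 h3
      have g1 : (Real.exp (S*u))⁻¹ * (Real.exp (S*T))⁻¹ * (T * (Real.exp (S*u) - 1))
          = T*(Real.exp (S*T))⁻¹ - T*(Real.exp (S*u))⁻¹*(Real.exp (S*T))⁻¹ := by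
        field_simp
      have g2 : (Real.exp (S*u))⁻¹ * (Real.exp (S*T))⁻¹ * (u * (Real.exp (S*T) - 1))
          = u*(Real.exp (S*u))⁻¹ - u*(Real.exp (S*u))⁻¹*(Real.exp (S*T))⁻¹ := by
        field_simp
      nlinarith [h4, g1, g2]
    · have : (Real.exp (S*T))⁻¹ < 1 := by
        rw [inv_lt_one_iff₀]; right; exact hB
      nlinarith [this]

lemma sinh_ratio (S θ t T : ℝ) (hS : 0 < S) (hT : 0 < T) :
    Real.sinh (S/2*(T-t)) * Real.exp (θ/2*t) / Real.sinh (S/2*T)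
      = Real.exp (θ/2*t - S/2*t) * ((1 - Real.exp (-(S*(T-t)))) / (1 - Real.exp (-(S*T)))) := by
  have hsinh : 0 < Real.sinh (S/2*T) := Real.sinh_pos_iff.mpr (by positivity)
  have hd : 0 < 1 - Real.exp (-(S*T)) := by
    rw [sub_pos, Real.exp_lt_one_iff]; nlinarith
  have e1 : Real.exp (S/2*(T-t)) = Real.exp (S/2*T) / Real.exp (S/2*t) := by
    rw [← Real.exp_sub]; ring_nf
  have e2 : Real.exp (-(S/2*(T-t))) = Real.exp (S/2*t) / Real.exp (S/2*T) := by
    rw [← Real.exp_sub]; ring_nf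
  have e3 : Real.exp (θ/2*t - S/2*t) = Real.exp (θ/2*t) / Real.exp (S/2*t) :=
    Real.exp_sub _ _
  have e4 : Real.exp (-(S*(T-t)))
      = Real.exp (S/2*t) * Real.exp (S/2*t) / (Real.exp (S/2*T) * Real.exp (S/2*T)) := by
    rw [← Real.exp_add, ← Real.exp_add, ← Real.exp_sub]; ring_nf
  have e5 : Real.exp (-(S*T)) = 1 / (Real.exp (S/2*T) * Real.exp (S/2*T)) := by
    rw [← Real.exp_add, one_div, ← Real.exp_neg]; ring_nf
  have e6 : Real.exp (-(S/2*T)) = 1 / Real.exp (S/2*T) := by rw [one_div, Real.exp_neg]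
  have key : (Real.sinh (S/2*(T-t)) * Real.exp (θ/2*t)) * (1 - Real.exp (-(S*T)))
      = (Real.exp (θ/2*t - S/2*t) * (1 - Real.exp (-(S*(T-t))))) * Real.sinh (S/2*T) := by
    rw [Real.sinh_eq, Real.sinh_eq, e1, e2, e3, e4, e5, e6]
    have h1 : Real.exp (S/2*t) ≠ 0 := (Real.exp_pos _).ne'
    have h2 : Real.exp (S/2*T) ≠ 0 := (Real.exp_pos _).ne'
    field_simp
  rw [div_eq_iff hsinh.ne']
  apply mul_right_cancel₀ hd.ne'
  have h2 : Real.exp (θ/2*t - S/2*t) * ((1 - Real.exp (-(S*(T-t)))) / (1 - Real.exp (-(S*T)))) *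
      Real.sinh (S/2*T) * (1 - Real.exp (-(S*T)))
      = Real.exp (θ/2*t - S/2*t) * (1 - Real.exp (-(S*(T-t)))) * Real.sinh (S/2*T) := by
    field_simp
  rw [h2]
  exact key


lemma part2_aux (T x θ a s t : ℝ) (hx : 0 < x) (hθ : 0 ≤ θ) (ha2 : θ/2 < a)
    (hT : 0 < T) (hs0 : 0 ≤ s) (hst : s < t) (htT : t < T) :
    x * Real.sinh (a*(T-t)) * Real.exp (θ/2*t) / Real.sinh (a*T)
      < x * Real.sinh (a*(T-s)) * Real.exp (θ/2*s) / Real.sinh (a*T) := by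
  have hapos : 0 < a := lt_of_le_of_lt (by linarith) ha2
  have hD : 0 < Real.sinh (a*T) := Real.sinh_pos_iff.mpr (by positivity)
  have core : Real.sinh (a*(T-t)) * Real.exp (θ/2*t)
      < Real.sinh (a*(T-s)) * Real.exp (θ/2*s) := by
    rw [Real.sinh_eq, Real.sinh_eq]
    have k1 := Real.exp_add (a*(T-t)) (θ/2*t)
    have k2 := Real.exp_add (-(a*(T-t))) (θ/2*t)
    have k3 := Real.exp_add (a*(T-s)) (θ/2*s)
    have k4 := Real.exp_add (-(a*(T-s))) (θ/2*s)
    have h1 : Real.exp (a*(T-t) + θ/2*t) < Real.exp (a*(T-s) + θ/2*s) := by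
      apply Real.exp_lt_exp.mpr; nlinarith
    have h2 : Real.exp (-(a*(T-s)) + θ/2*s) < Real.exp (-(a*(T-t)) + θ/2*t) := by
      apply Real.exp_lt_exp.mpr; nlinarith
    nlinarith [k1, k2, k3, k4, h1, h2]
  rw [div_lt_div_iff₀ hD hD]
  have h3 : x * (Real.sinh (a*(T-t)) * Real.exp (θ/2*t)) * Real.sinh (a*T)
      < x * (Real.sinh (a*(T-s)) * Real.exp (θ/2*s)) * Real.sinh (a*T) :=
    mul_lt_mul_of_pos_right (mul_lt_mul_of_pos_left core hx) hD
  nlinarith [h3]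

lemma part4_aux (T t x θ₁ θ₂ s₁ s₂ : ℝ) (hT : 0 < T) (ht : 0 < t) (htT : t < T)
    (hx : 0 < x) (hs₁pos : 0 < s₁) (hs₂pos : 0 < s₂) (hlt : s₁ < s₂)
    (hp : s₂ - θ₂ < s₁ - θ₁) :
    x * Real.sinh (s₁/2*(T-t)) * Real.exp (θ₁/2*t) / Real.sinh (s₁/2*T)
      < x * Real.sinh (s₂/2*(T-t)) * Real.exp (θ₂/2*t) / Real.sinh (s₂/2*T) := by
  rw [show ∀ y z w : ℝ, x*y*z/w = x*(y*z/w) from fun y z w => by ring,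
    sinh_ratio s₁ θ₁ t T hs₁pos hT,
    show ∀ y z w : ℝ, x*y*z/w = x*(y*z/w) from fun y z w => by ring,
    sinh_ratio s₂ θ₂ t T hs₂pos hT]
  have hH := ratio_strictMono (u := T - t) (T := T) (by linarith) (by linarith)
    (Set.mem_Ioi.mpr hs₁pos) (Set.mem_Ioi.mpr hs₂pos) hlt
  simp only at hH
  have hE : Real.exp (θ₁/2*t - s₁/2*t) < Real.exp (θ₂/2*t - s₂/2*t) := by
    apply Real.exp_lt_exp.mpr
    nlinarith [mul_lt_mul_of_pos_right hp ht]
  have hnum : 0 < 1 - Real.exp (-(s₁*(T-t))) := by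
    rw [sub_pos, Real.exp_lt_one_iff]; nlinarith
  have hden : 0 < 1 - Real.exp (-(s₁*T)) := by
    rw [sub_pos, Real.exp_lt_one_iff]; nlinarith
  have hH1pos : 0 < (1 - Real.exp (-(s₁*(T-t)))) / (1 - Real.exp (-(s₁*T))) :=
    div_pos hnum hden
  apply mul_lt_mul_of_pos_left _ hx
  have t1 := mul_lt_mul_of_pos_right hE hH1pos
  have t2 := mul_lt_mul_of_pos_left hH (Real.exp_pos (θ₂/2*t - s₂/2*t))
  linarith

theorem optimal_trajectory_properties (Λ ασ T x : ℝ)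
    (hΛ : 0 < Λ) (hασ : 0 < ασ) (hT : 0 < T) (hx : 0 < x)
    (X : ℝ → ℝ → ℝ)
    (hX : X = fun t θ =>
      x * Real.sinh (Real.sqrt (θ ^ 2 + 4 * ασ / Λ) / 2 * (T - t)) * Real.exp (θ / 2 * t) /
        Real.sinh (Real.sqrt (θ ^ 2 + 4 * ασ / Λ) / 2 * T)) :
    (∀ θ, 0 ≤ θ → X 0 θ = x) ∧
    (∀ θ, 0 ≤ θ → StrictAntiOn (fun t => X t θ) (Set.Ico 0 T)) ∧
    (∀ θ, 0 ≤ θ → Filter.Tendsto (fun t => X t θ) (nhdsWithin T (Set.Iio T)) (nhds 0)) ∧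
    (∀ t, 0 < t → t < T → ∀ θ₁ θ₂, 0 ≤ θ₁ → θ₁ < θ₂ → X t θ₁ < X t θ₂) := by
  have hc : 0 < 4 * ασ / Λ := by positivity
  have hs : ∀ θ : ℝ, 0 < Real.sqrt (θ^2 + 4*ασ/Λ) :=
    fun θ => Real.sqrt_pos.mpr (by positivity)
  have hsq : ∀ θ : ℝ, 0 ≤ θ → θ < Real.sqrt (θ^2 + 4*ασ/Λ) := by
    intro θ hθ
    have h1 : (0:ℝ) ≤ θ^2 + 4*ασ/Λ := by positivity
    nlinarith [Real.sq_sqrt h1, hs θ]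
  refine ⟨?_, ?_, ?_, ?_⟩
  · intro θ hθ
    have hsinh : Real.sinh (Real.sqrt (θ^2 + 4*ασ/Λ)/2*T) ≠ 0 :=
      (Real.sinh_pos_iff.mpr (by positivity)).ne'
    simp only [hX, sub_zero, mul_zero, Real.exp_zero, mul_one]
    rw [mul_div_assoc, div_self hsinh, mul_one]
  · intro θ hθ s hs' t ht' hst
    simp only [hX, Set.mem_Ico] at *
    exact part2_aux T x θ (Real.sqrt (θ^2 + 4*ασ/Λ)/2) s t hx hθ
      (by have := hsq θ hθ; linarith) hT hs'.1 hst ht'.2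
  · intro θ hθ
    simp only [hX]
    have hcont : Continuous (fun t : ℝ =>
        x * Real.sinh (Real.sqrt (θ^2 + 4*ασ/Λ)/2*(T-t)) * Real.exp (θ/2*t) /
          Real.sinh (Real.sqrt (θ^2 + 4*ασ/Λ)/2*T)) := by fun_prop
    have h0 : x * Real.sinh (Real.sqrt (θ^2 + 4*ασ/Λ)/2*(T-T)) * Real.exp (θ/2*T) /
        Real.sinh (Real.sqrt (θ^2 + 4*ασ/Λ)/2*T) = 0 := by simp
    have h3 := (hcont.tendsto T).mono_left (nhdsWithin_le_nhds (s := Set.Iio T))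
    rw [h0] at h3
    exact h3
  · intro t ht htT θ₁ θ₂ hθ₁ hθ₁₂
    have hθ₂ : 0 ≤ θ₂ := le_of_lt (lt_of_le_of_lt hθ₁ hθ₁₂)
    simp only [hX]
    have hs₁pos : 0 < Real.sqrt (θ₁^2 + 4*ασ/Λ) := hs θ₁
    have hs₂pos : 0 < Real.sqrt (θ₂^2 + 4*ασ/Λ) := hs θ₂
    have h1 : θ₁ < Real.sqrt (θ₁^2 + 4*ασ/Λ) := hsq θ₁ hθ₁
    have h2 : θ₂ < Real.sqrt (θ₂^2 + 4*ασ/Λ) := hsq θ₂ hθ₂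
    have hlt : Real.sqrt (θ₁^2 + 4*ασ/Λ) < Real.sqrt (θ₂^2 + 4*ασ/Λ) :=
      Real.sqrt_lt_sqrt (by positivity) (by nlinarith)
    have hsqq1 : Real.sqrt (θ₁^2 + 4*ασ/Λ)^2 = θ₁^2 + 4*ασ/Λ := Real.sq_sqrt (by positivity)
    have hsqq2 : Real.sqrt (θ₂^2 + 4*ασ/Λ)^2 = θ₂^2 + 4*ασ/Λ := Real.sq_sqrt (by positivity)
    have hp : Real.sqrt (θ₂^2 + 4*ασ/Λ) - θ₂ < Real.sqrt (θ₁^2 + 4*ασ/Λ) - θ₁ := by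
      nlinarith
    exact part4_aux T t x θ₁ θ₂ _ _ hT ht htT hx hs₁pos hs₂pos hlt hp
end

section
/- Let Λ > 0, ασ > 0, θ ≥ 0, θ̃ = √(θ² + 4ασ/Λ), T > 0, x > 0, and define E(t;θ) := x·sinh((θ̃/2)(T − t))·exp(−(θ/2)t)/sinh((θ̃/2)T) for t ∈ (0,T). Then for each fixed t ∈ (0,T), the map θ ↦ E(t;θ) is strictly decreasing on (0,∞). -/
open Real

lemma sinh_pos' {y : ℝ} (hy : 0 < y) : 0 < Real.sinh y := by
  have := Real.sinh_lt_sinh.2 hy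
  simpa using this

lemma lem1 : ∀ y > (0:ℝ), Real.sinh y < y * Real.cosh y := by
  have key : StrictMonoOn (fun y => y * Real.cosh y - Real.sinh y) (Set.Ici 0) := by
    apply strictMonoOn_of_deriv_pos (convex_Ici 0)
    · fun_prop
    · intro y hy
      rw [interior_Ici] at hy
      have hy' : 0 < y := hy
      have h : HasDerivAt (fun y => y * Real.cosh y - Real.sinh y)
          (1 * Real.cosh y + y * Real.sinh y - Real.cosh y) y :=
        ((hasDerivAt_id y).mul (Real.hasDerivAt_cosh y)).sub (Real.hasDerivAt_sinh y)
      rw [h.deriv]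
      have h1 : 0 < Real.sinh y := sinh_pos' hy'
      nlinarith [mul_pos hy' h1]
  intro y hy
  have := key (Set.self_mem_Ici) (Set.mem_Ici.2 hy.le) hy
  simpa using this

lemma lem2 : ∀ u v : ℝ, 0 < v → v < u → u * Real.sinh v < v * Real.sinh u := by
  have key : StrictMonoOn (fun y => Real.sinh y / y) (Set.Ioi 0) := by
    apply strictMonoOn_of_deriv_pos (convex_Ioi 0)
    · apply ContinuousOn.div (by fun_prop) (by fun_prop)
      intro y hy; exact ne_of_gt hy
    · intro y hy
      rw [interior_Ioi] at hy
      have hy' : 0 < y := hy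
      have h : HasDerivAt (fun y => Real.sinh y / y)
          ((Real.cosh y * y - Real.sinh y * 1) / y ^ 2) y :=
        (Real.hasDerivAt_sinh y).div (hasDerivAt_id y) (ne_of_gt hy')
      rw [h.deriv]
      have := lem1 y hy'
      have hy2 : (0:ℝ) < y ^ 2 := by positivity
      apply div_pos (by nlinarith) hy2
  intro u v hv hvu
  have h1 : Real.sinh v / v < Real.sinh u / u :=
    key (Set.mem_Ioi.2 hv) (Set.mem_Ioi.2 (hv.trans hvu)) hvu
  rw [div_lt_div_iff₀ hv (hv.trans hvu)] at h1
  linarith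

lemma lem3 (a b u : ℝ) (ha : 0 < a) (hab : a < b) (hu : 0 < u) :
    a * Real.cosh (u * a) * Real.sinh (u * b) < b * Real.sinh (u * a) * Real.cosh (u * b) := by
  have h1 : Real.sinh (u*a) * Real.cosh (u*b) - Real.cosh (u*a) * Real.sinh (u*b)
      = -Real.sinh (u*(b-a)) := by
    rw [show u*(b-a) = u*b - u*a by ring, Real.sinh_sub]; ring
  have h2 : Real.sinh (u*a) * Real.cosh (u*b) + Real.cosh (u*a) * Real.sinh (u*b)
      = Real.sinh (u*(a+b)) := by
    rw [show u*(a+b) = u*a + u*b by ring, Real.sinh_add]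
  have h3 := lem2 (u*(a+b)) (u*(b-a)) (by nlinarith) (by nlinarith)
  have h4 : (a+b)*Real.sinh (u*(b-a)) < (b-a)*Real.sinh (u*(a+b)) := by
    have h5 : u * ((a+b)*Real.sinh (u*(b-a))) < u * ((b-a)*Real.sinh (u*(a+b))) := by
      nlinarith [h3]
    exact lt_of_mul_lt_mul_left h5 hu.le
  have h5 : a*(Real.sinh (u*(a+b))+Real.sinh (u*(b-a)))
      < b*(Real.sinh (u*(a+b))-Real.sinh (u*(b-a))) := by nlinarith [h4]
  have hYv : Real.cosh (u*a) * Real.sinh (u*b)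
      = (Real.sinh (u*(a+b))+Real.sinh (u*(b-a)))/2 := by linarith
  have hXv : Real.sinh (u*a) * Real.cosh (u*b)
      = (Real.sinh (u*(a+b))-Real.sinh (u*(b-a)))/2 := by linarith
  have e1 : a * Real.cosh (u*a) * Real.sinh (u*b)
      = a * ((Real.sinh (u*(a+b))+Real.sinh (u*(b-a)))/2) := by rw [mul_assoc, hYv]
  have e2 : b * Real.sinh (u*a) * Real.cosh (u*b)
      = b * ((Real.sinh (u*(a+b))-Real.sinh (u*(b-a)))/2) := by rw [mul_assoc, hXv]
  rw [e1, e2]; linarith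

lemma lem4 (a b : ℝ) (ha : 0 < a) (hab : a < b) :
    StrictAntiOn (fun u => Real.sinh (u * a) / Real.sinh (u * b)) (Set.Ioi 0) := by
  apply strictAntiOn_of_deriv_neg (convex_Ioi 0)
  · apply ContinuousOn.div (by fun_prop) (by fun_prop)
    intro y hy
    exact ne_of_gt (sinh_pos' (mul_pos hy (ha.trans hab)))
  · intro u hu
    rw [interior_Ioi] at hu
    have hu' : 0 < u := hu
    have hsb : 0 < Real.sinh (u * b) := sinh_pos' (mul_pos hu' (ha.trans hab))
    have h : HasDerivAt (fun u => Real.sinh (u * a) / Real.sinh (u * b))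
        ((Real.cosh (u*a) * a * Real.sinh (u*b) - Real.sinh (u*a) * (Real.cosh (u*b) * b))
          / Real.sinh (u*b) ^ 2) u :=
      ((hasDerivAt_mul_const a).sinh).div ((hasDerivAt_mul_const b).sinh) (ne_of_gt hsb)
    rw [h.deriv]
    apply div_neg_of_neg_of_pos _ (by positivity)
    have := lem3 a b u ha hab hu'
    nlinarith [this]

theorem expected_position_strict_anti_in_theta (Λ ασ T x t : ℝ)
    (hΛ : 0 < Λ) (hασ : 0 < ασ) (hT : 0 < T) (hx : 0 < x) (ht0 : 0 < t) (htT : t < T)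
    (E : ℝ → ℝ)
    (hE : E = fun θ =>
      x * Real.sinh (Real.sqrt (θ ^ 2 + 4 * ασ / Λ) / 2 * (T - t)) * Real.exp (-(θ / 2) * t) /
        Real.sinh (Real.sqrt (θ ^ 2 + 4 * ασ / Λ) / 2 * T)) :
    StrictAntiOn E (Set.Ioi 0) := by
  intro θ1 hθ1 θ2 hθ2 h12
  simp only [Set.mem_Ioi] at hθ1 hθ2
  have hc : 0 < 4 * ασ / Λ := by positivity
  have hE1 : E θ1 = x * (Real.sinh (Real.sqrt (θ1 ^ 2 + 4 * ασ / Λ) / 2 * (T - t)) /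
      Real.sinh (Real.sqrt (θ1 ^ 2 + 4 * ασ / Λ) / 2 * T)) * Real.exp (-(θ1 / 2) * t) := by
    simp only [hE]; ring
  have hE2 : E θ2 = x * (Real.sinh (Real.sqrt (θ2 ^ 2 + 4 * ασ / Λ) / 2 * (T - t)) /
      Real.sinh (Real.sqrt (θ2 ^ 2 + 4 * ασ / Λ) / 2 * T)) * Real.exp (-(θ2 / 2) * t) := by
    simp only [hE]; ring
  set u1 := Real.sqrt (θ1 ^ 2 + 4 * ασ / Λ) / 2 with hu1def
  set u2 := Real.sqrt (θ2 ^ 2 + 4 * ασ / Λ) / 2 with hu2def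
  have hu1 : 0 < u1 := by
    rw [hu1def]; have : 0 < Real.sqrt (θ1 ^ 2 + 4 * ασ / Λ) := Real.sqrt_pos.2 (by positivity)
    linarith
  have hu2 : 0 < u2 := by
    rw [hu2def]; have : 0 < Real.sqrt (θ2 ^ 2 + 4 * ασ / Λ) := Real.sqrt_pos.2 (by positivity)
    linarith
  have hu12 : u1 < u2 := by
    rw [hu1def, hu2def]
    have : Real.sqrt (θ1 ^ 2 + 4 * ασ / Λ) < Real.sqrt (θ2 ^ 2 + 4 * ασ / Λ) :=
      Real.sqrt_lt_sqrt (by positivity) (by nlinarith)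
    linarith
  have hr : Real.sinh (u2 * (T - t)) / Real.sinh (u2 * T)
      < Real.sinh (u1 * (T - t)) / Real.sinh (u1 * T) :=
    lem4 (T - t) T (by linarith) (by linarith) (Set.mem_Ioi.2 hu1) (Set.mem_Ioi.2 hu2) hu12
  have hr2 : 0 < Real.sinh (u2 * (T - t)) / Real.sinh (u2 * T) :=
    div_pos (sinh_pos' (mul_pos hu2 (by linarith))) (sinh_pos' (mul_pos hu2 hT))
  have he : Real.exp (-(θ2 / 2) * t) < Real.exp (-(θ1 / 2) * t) :=
    Real.exp_lt_exp.2 (by nlinarith)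
  have he2 : 0 < Real.exp (-(θ2 / 2) * t) := Real.exp_pos _
  rw [hE1, hE2]
  calc x * (Real.sinh (u2 * (T - t)) / Real.sinh (u2 * T)) * Real.exp (-(θ2 / 2) * t)
      < x * (Real.sinh (u1 * (T - t)) / Real.sinh (u1 * T)) * Real.exp (-(θ2 / 2) * t) := by
        exact mul_lt_mul_of_pos_right (mul_lt_mul_of_pos_left hr hx) he2
    _ < x * (Real.sinh (u1 * (T - t)) / Real.sinh (u1 * T)) * Real.exp (-(θ1 / 2) * t) := by
        apply mul_lt_mul_of_pos_left he
        exact mul_pos hx (hr2.trans hr)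
end
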